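/- Let q ∈ ℂ with q ≠ 0 which is not a root of unity. The five S-Heun operators L, M₁, M₂, R₁, R₂ are linearly independent: if c₀, c₁, c₂, c₃, c₄ ∈ ℂ are such that c₀(Lf)(z) + c₁(M₁f)(z) + c₂(M₂f)(z) + c₃(R₁f)(z) + c₄(R₂f)(z) = 0 for every function f : ℂ → ℂ and every z ∈ ℂ with z ≠ 0 and z² ≠ 1, then c₀ = c₁ = c₂ = c₃ = c₄ = 0. -/

import Mathlib

noncomputable def Lop (q : ℂ) (f : ℂ → ℂ) (z : ℂ) : ℂ :=
  (f (q * z) - f (q⁻¹ * z)) / ((q - q⁻¹) * (z - z⁻¹))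

noncomputable def M1op (q : ℂ) (f : ℂ → ℂ) (z : ℂ) : ℂ :=
  ((q * z + q⁻¹ * z⁻¹) * f (q⁻¹ * z) - (q⁻¹ * z + q * z⁻¹) * f (q * z))
    / ((q - q⁻¹) * (z - z⁻¹))

noncomputable def M2op (q : ℂ) (f : ℂ → ℂ) (z : ℂ) : ℂ :=
  (z + z⁻¹) * (f (q * z) - f (q⁻¹ * z)) / ((q - q⁻¹) * (z - z⁻¹))

noncomputable def R1op (q : ℂ) (f : ℂ → ℂ) (z : ℂ) : ℂ :=
  (z + z⁻¹) * ((q * z + q⁻¹ * z⁻¹) * f (q⁻¹ * z) - (q⁻¹ * z + q * z⁻¹) * f (q * z))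
    / ((q - q⁻¹) * (z - z⁻¹))

noncomputable def R2op (q : ℂ) (f : ℂ → ℂ) (z : ℂ) : ℂ :=
  1 / (q - q⁻¹) *
    (q ^ 2 * (z + z⁻¹) * (z * f (q⁻¹ * z) - z⁻¹ * f (q * z)) / (z - z⁻¹)
      - (z * f (q⁻¹ * z) + z⁻¹ * f (q * z)))

/-- the five S-Heun operators `L, M₁, M₂, R₁, R₂` are linearly
independent (for `q` not a root of unity). -/
theorem sHeun_linearly_independent (q : ℂ) (hq : q ≠ 0)
    (hroot : ∀ n : ℕ, 0 < n → q ^ n ≠ 1)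
    (c₀ c₁ c₂ c₃ c₄ : ℂ)
    (h : ∀ (f : ℂ → ℂ) (z : ℂ), z ≠ 0 → z ^ 2 ≠ 1 →
        c₀ * Lop q f z + c₁ * M1op q f z + c₂ * M2op q f z
          + c₃ * R1op q f z + c₄ * R2op q f z = 0) :
    c₀ = 0 ∧ c₁ = 0 ∧ c₂ = 0 ∧ c₃ = 0 ∧ c₄ = 0 := by
  have hq2 : q ^ 2 ≠ 1 := hroot 2 (by norm_num)
  have hqq : q - q⁻¹ ≠ 0 := by
    intro hc
    apply hq2
    rw [sub_eq_zero] at hc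
    field_simp at hc
    linear_combination hc
  have key : ∀ z : ℂ, z ≠ 0 → z ^ 2 ≠ 1 →
      c₀ * q * z ^ 2 - c₁ * (z ^ 3 + q ^ 2 * z) + c₂ * q * (z ^ 3 + z)
        - c₃ * (z ^ 4 + (q ^ 2 + 1) * z ^ 2 + q ^ 2)
        + c₄ * q * (1 - z ^ 2 - q ^ 2 * (z ^ 2 + 1)) = 0 := by
    intro z hz hz2
    have hz1 : z - z⁻¹ ≠ 0 := by
      intro hc
      apply hz2
      rw [sub_eq_zero] at hc
      field_simp at hc
      linear_combination hc
    have hne : q⁻¹ * z ≠ q * z := by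
      intro hc
      apply hq2
      have := mul_right_cancel₀ hz hc
      field_simp at this
      linear_combination -this
    have E := h (fun x => if x = q * z then (1 : ℂ) else 0) z hz hz2
    have hQ : q * q - 1 ≠ 0 := fun hc => hq2 (by linear_combination hc)
    have hZ : z * z - 1 ≠ 0 := fun hc => hz2 (by linear_combination hc)
    simp only [Lop, M1op, M2op, R1op, R2op, if_pos rfl, if_neg hne] at E
    field_simp [hq, hz, hQ, hZ] at E
    have hD1 : (q * q - 1) * (z * z - 1) * (z * ((q * q - 1) * (z * z - 1))) *
        (z * (q * z) * ((q * q - 1) * (z * z - 1))) ≠ 0 := by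
      apply_rules [mul_ne_zero]
    have hD2 : (q * q - 1) * (z * z * (z * z - 1) * z) ≠ 0 := by
      apply_rules [mul_ne_zero]
    rw [if_pos trivial] at E
    linear_combination E
  have E2 := key 2 (by norm_num) (by norm_num)
  have E3 := key 3 (by norm_num) (by norm_num)
  have E4 := key 4 (by norm_num) (by norm_num)
  have E5 := key 5 (by norm_num) (by norm_num)
  have E6 := key 6 (by norm_num) (by norm_num)
  -- a4 = -c₃
  have hc3 : c₃ = 0 := by
    linear_combination (-(1:ℂ)/24) * E2 + (1/6) * E3 + (-(1:ℂ)/4) * E4 + (1/6) * E5 + (-(1:ℂ)/24) * E6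
  -- a3 = -c₁ + c₂ q ; a1 = -c₁ q² + c₂ q
  have ha3 : -c₁ + c₂ * q = 0 := by
    linear_combination (-(3:ℂ)/4) * E2 + (17/6) * E3 + (-(4:ℂ)) * E4 + (5/2) * E5 + (-(7:ℂ)/12) * E6
  have ha1 : -c₁ * q ^ 2 + c₂ * q = 0 := by
    linear_combination (-(57:ℂ)/4) * E2 + (134/3) * E3 + (-(54:ℂ)) * E4 + (30) * E5 + (-(77:ℂ)/12) * E6
  have hc1 : c₁ = 0 := by
    have : c₁ * (q ^ 2 - 1) = 0 := by linear_combination ha3 - ha1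
    rcases mul_eq_zero.mp this with h' | h'
    · exact h'
    · exact absurd (by linear_combination h') hq2
  have hc2 : c₂ = 0 := by
    have : c₂ * q = 0 := by linear_combination ha3 + hc1
    rcases mul_eq_zero.mp this with h' | h'
    · exact h'
    · exact absurd h' hq
  -- a2 = c₀ q - c₃ (q²+1) - c₄ q (q²+1); a0 = -c₃ q² + c₄ q (1-q²)
  have ha0 : -c₃ * q ^ 2 + c₄ * q * (1 - q ^ 2) = 0 := by
    linear_combination (15:ℂ) * E2 + (-(40:ℂ)) * E3 + (45:ℂ) * E4 + (-(24:ℂ)) * E5 + (5:ℂ) * E6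
  have hc4 : c₄ = 0 := by
    have : c₄ * (q * (1 - q ^ 2)) = 0 := by linear_combination ha0 + q ^ 2 * hc3
    rcases mul_eq_zero.mp this with h' | h'
    · exact h'
    · rcases mul_eq_zero.mp h' with h'' | h''
      · exact absurd h'' hq
      · exact absurd (by linear_combination -h'') hq2
  have ha2 : c₀ * q - c₃ * (q ^ 2 + 1) - c₄ * q * (q ^ 2 + 1) = 0 := by
    linear_combination (119:ℂ)/24 * E2 + (-(52:ℂ)/3) * E3 + (91/4 : ℂ) * E4 + (-(40:ℂ)/3) * E5 + (71/24 : ℂ) * E6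
  have hc0 : c₀ = 0 := by
    have : c₀ * q = 0 := by
      linear_combination ha2 + (q ^ 2 + 1) * hc3 + (q * (q ^ 2 + 1)) * hc4
    rcases mul_eq_zero.mp this with h' | h'
    · exact h'
    · exact absurd h' hq
  exact ⟨hc0, hc1, hc2, hc3, hc4⟩
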